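/- Let G be a graph with maximum degree Δ. Suppose for each index i in some set I we have a pair (u_i, w_i) of non-adjacent vertices of G such that the pairs are pairwise disjoint, and each of u_i, w_i has at most 4εΔ neighbors outside its own almost-clique, and no other vertex of the almost-clique of the pair is involved in any pair. Form the virtual graph H on the pairs, joining two pairs when some endpoint of one is adjacent to some endpoint of the other. Then assigning to each pair the list L(u_i) ∩ L(w_i) of colors available to both endpoints from palettes of size Δ minus at most 8εΔ conflicts yields a list-coloring instance on H in which every pair's list exceeds its H-degree, provided 16εΔ < Δ/2; in particular H is (deg+1)-list colorable and a proper H-coloring gives a same-coloring of each pair that extends to a proper partial coloring of G. -/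

import Mathlib

lemma greedy_list_coloring {ι α : Type*} [Fintype ι] [DecidableEq ι] [DecidableEq α]
    (R : ι → ι → Prop) [DecidableRel R] (hsymm : ∀ i j, R i j → R j i)
    (hirr : ∀ i, ¬ R i i)
    (Lst : ι → Finset α)
    (h : ∀ i, ((Finset.univ : Finset ι).filter (R i)).card < (Lst i).card) :
    ∃ c : ι → α, (∀ i, c i ∈ Lst i) ∧ ∀ i j, R i j → c i ≠ c j := by
  have hne : ∀ i, (Lst i).Nonempty := fun i =>
    Finset.card_pos.mp (Nat.lt_of_le_of_lt (Nat.zero_le _) (h i))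
  suffices H : ∀ s : Finset ι, ∃ c : ι → α, (∀ i, c i ∈ Lst i) ∧
      ∀ i ∈ s, ∀ j ∈ s, R i j → c i ≠ c j by
    obtain ⟨c, h1, h2⟩ := H Finset.univ
    exact ⟨c, h1, fun i j hij => h2 i (Finset.mem_univ i) j (Finset.mem_univ j) hij⟩
  intro s
  induction s using Finset.induction with
  | empty => exact ⟨fun i => (hne i).choose, fun i => (hne i).choose_spec, by simp⟩
  | @insert a s ha ih =>
    obtain ⟨c, hc1, hc2⟩ := ih
    set F : Finset α := (s.filter (R a)).image c with hF
    have hFcard : F.card < (Lst a).card := by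
      calc F.card ≤ (s.filter (R a)).card := Finset.card_image_le
        _ ≤ ((Finset.univ : Finset ι).filter (R a)).card :=
            Finset.card_le_card (Finset.filter_subset_filter _ (Finset.subset_univ s))
        _ < (Lst a).card := h a
    have hnsub : ¬ Lst a ⊆ F := fun hsub => absurd (Finset.card_le_card hsub) (by omega)
    obtain ⟨a0, ha0L, ha0F⟩ := Finset.not_subset.mp hnsub
    refine ⟨Function.update c a a0, ?_, ?_⟩
    · intro i
      by_cases hia : i = a
      · rw [hia, Function.update_self]; exact ha0L
      · simpa [Function.update_of_ne hia] using hc1 i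
    · intro i hi j hj hij
      by_cases hia : i = a
      · subst hia
        by_cases hja : j = i
        · subst hja; exact absurd hij (hirr j)
        · have hjs : j ∈ s := (Finset.mem_insert.mp hj).resolve_left hja
          have hmem : c j ∈ F :=
            Finset.mem_image_of_mem c (Finset.mem_filter.mpr ⟨hjs, hij⟩)
          rw [Function.update_self, Function.update_of_ne hja]
          exact fun hEq => ha0F (hEq ▸ hmem)
      · have his : i ∈ s := (Finset.mem_insert.mp hi).resolve_left hia
        by_cases hja : j = a
        · subst hja
          have hmem : c i ∈ F :=
            Finset.mem_image_of_mem c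
              (Finset.mem_filter.mpr ⟨his, hsymm _ _ hij⟩)
          rw [Function.update_self, Function.update_of_ne hia]
          exact fun hEq => ha0F (hEq ▸ hmem)
        · have hjs : j ∈ s := (Finset.mem_insert.mp hj).resolve_left hja
          rw [Function.update_of_ne hia, Function.update_of_ne hja]
          exact hc2 i his j hjs hij

/-- Same-coloring disjoint non-adjacent pairs via the virtual graph H on pairs.
If each endpoint has at most 4εΔ neighbors outside its own almost-clique, no endpoint of
another pair lies in the almost-clique of a pair, each pair's common list has size at
least Δ - 8εΔ, and 16εΔ < Δ/2, then each pair has H-degree at most 16εΔ, strictly less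
than its list size; hence the pairs can be list-colored so that adjacent pairs get
distinct colors, yielding a proper partial coloring of G. -/
theorem pair_virtual_graph_coloring {V ι : Type*} [Fintype V] [DecidableEq V]
    [Fintype ι] [DecidableEq ι]
    (G : SimpleGraph V) [DecidableRel G.Adj]
    (Δ : ℕ) (ε : ℝ) (hε0 : 0 < ε) (h16 : 16 * ε * Δ < (Δ : ℝ) / 2)
    (hdeg : ∀ v : V, G.degree v ≤ Δ)
    (u w : ι → V) (C : ι → Finset V)
    (huC : ∀ i, u i ∈ C i) (hwC : ∀ i, w i ∈ C i)
    (hne : ∀ i, u i ≠ w i) (hnadj : ∀ i, ¬ G.Adj (u i) (w i))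
    (hdisj : ∀ i j : ι, i ≠ j →
      u i ≠ u j ∧ u i ≠ w j ∧ w i ≠ u j ∧ w i ≠ w j)
    (hout_u : ∀ i, (((G.neighborFinset (u i)) \ C i).card : ℝ) ≤ 4 * ε * Δ)
    (hout_w : ∀ i, (((G.neighborFinset (w i)) \ C i).card : ℝ) ≤ 4 * ε * Δ)
    (hother : ∀ i j : ι, i ≠ j → u j ∉ C i ∧ w j ∉ C i)
    (L : V → Finset (Fin Δ))
    (hL : ∀ i, (Δ : ℝ) - 8 * ε * Δ ≤ (((L (u i)) ∩ (L (w i))).card : ℝ)) :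
    (∀ i : ι,
      (((Finset.univ : Finset ι).filter fun j => j ≠ i ∧
          (G.Adj (u i) (u j) ∨ G.Adj (u i) (w j) ∨ G.Adj (w i) (u j) ∨
            G.Adj (w i) (w j))).card : ℝ) ≤ 16 * ε * Δ ∧
      ((Finset.univ : Finset ι).filter fun j => j ≠ i ∧
          (G.Adj (u i) (u j) ∨ G.Adj (u i) (w j) ∨ G.Adj (w i) (u j) ∨
            G.Adj (w i) (w j))).card < ((L (u i)) ∩ (L (w i))).card) ∧
    ∃ c : ι → Fin Δ,
      (∀ i, c i ∈ (L (u i)) ∩ (L (w i))) ∧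
      ∀ i j : ι, i ≠ j → ∀ x y : V, (x = u i ∨ x = w i) → (y = u j ∨ y = w j) →
        G.Adj x y → c i ≠ c j := by
  have hεΔ : (0 : ℝ) ≤ ε * Δ := mul_nonneg hε0.le (Nat.cast_nonneg Δ)
  have hΔ0 : (0 : ℝ) ≤ (Δ : ℝ) := Nat.cast_nonneg Δ
  -- the key cardinality bound
  have hcard : ∀ i : ι,
      (((Finset.univ : Finset ι).filter fun j => j ≠ i ∧
          (G.Adj (u i) (u j) ∨ G.Adj (u i) (w j) ∨ G.Adj (w i) (u j) ∨
            G.Adj (w i) (w j))).card : ℝ) ≤ 8 * ε * Δ := by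
    intro i
    set S := (Finset.univ : Finset ι).filter fun j => j ≠ i ∧
          (G.Adj (u i) (u j) ∨ G.Adj (u i) (w j) ∨ G.Adj (w i) (u j) ∨
            G.Adj (w i) (w j)) with hS
    set T := ((G.neighborFinset (u i)) \ C i) ∪ ((G.neighborFinset (w i)) \ C i) with hT
    have hmap : S.card ≤ T.card := by
      apply Finset.card_le_card_of_injOn
        (fun j => if G.Adj (u i) (u j) ∨ G.Adj (w i) (u j) then u j else w j)
      · intro j hj
        obtain ⟨hji, hadj⟩ := by simpa [hS] using hj
        have hCj := hother i j (Ne.symm hji)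
        by_cases hcase : G.Adj (u i) (u j) ∨ G.Adj (w i) (u j)
        · simp only [hcase, if_true, hT, Finset.mem_coe, Finset.mem_union, Finset.mem_sdiff,
            SimpleGraph.mem_neighborFinset]
          rcases hcase with h1 | h1
          · exact Or.inl ⟨h1, hCj.1⟩
          · exact Or.inr ⟨h1, hCj.1⟩
        · push_neg at hcase
          have hadj' : G.Adj (u i) (w j) ∨ G.Adj (w i) (w j) := by tauto
          simp only [hcase, hT, Finset.mem_coe, Finset.mem_union, Finset.mem_sdiff,
            SimpleGraph.mem_neighborFinset, or_self, if_false]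
          rcases hadj' with h1 | h1
          · exact Or.inl ⟨h1, hCj.2⟩
          · exact Or.inr ⟨h1, hCj.2⟩
      · intro j hj j' hj' hEq
        by_contra hjj'
        obtain ⟨d1, d2, d3, d4⟩ := hdisj j j' hjj'
        simp only at hEq
        by_cases c1 : G.Adj (u i) (u j) ∨ G.Adj (w i) (u j) <;>
          by_cases c2 : G.Adj (u i) (u j') ∨ G.Adj (w i) (u j') <;>
          simp only [c1, c2, if_true, if_false, if_pos, if_neg] at hEq <;>
          tauto
    have hTcard : (T.card : ℝ) ≤ 8 * ε * Δ := by
      have h1 := Finset.card_union_le ((G.neighborFinset (u i)) \ C i)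
        ((G.neighborFinset (w i)) \ C i)
      have h2 := hout_u i
      have h3 := hout_w i
      have : (T.card : ℝ) ≤ (((G.neighborFinset (u i)) \ C i).card : ℝ) +
          (((G.neighborFinset (w i)) \ C i).card : ℝ) := by exact_mod_cast h1
      linarith
    calc ((S.card : ℝ)) ≤ (T.card : ℝ) := by exact_mod_cast hmap
      _ ≤ 8 * ε * Δ := hTcard
  have hlt : ∀ i : ι,
      ((Finset.univ : Finset ι).filter fun j => j ≠ i ∧
          (G.Adj (u i) (u j) ∨ G.Adj (u i) (w j) ∨ G.Adj (w i) (u j) ∨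
            G.Adj (w i) (w j))).card < ((L (u i)) ∩ (L (w i))).card := by
    intro i
    have h1 := hcard i
    have h2 := hL i
    have : (((Finset.univ : Finset ι).filter fun j => j ≠ i ∧
          (G.Adj (u i) (u j) ∨ G.Adj (u i) (w j) ∨ G.Adj (w i) (u j) ∨
            G.Adj (w i) (w j))).card : ℝ) < (((L (u i)) ∩ (L (w i))).card : ℝ) := by
      linarith
    exact_mod_cast this
  refine ⟨fun i => ⟨le_trans (hcard i) (by linarith), hlt i⟩, ?_⟩
  -- greedy coloring
  obtain ⟨c, hc1, hc2⟩ := greedy_list_coloring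
    (fun i j => j ≠ i ∧ (G.Adj (u i) (u j) ∨ G.Adj (u i) (w j) ∨ G.Adj (w i) (u j) ∨
      G.Adj (w i) (w j)))
    (fun i j hRij => ⟨hRij.1.symm, by
      rcases hRij.2 with h | h | h | h
      · exact Or.inl h.symm
      · exact Or.inr (Or.inr (Or.inl h.symm))
      · exact Or.inr (Or.inl h.symm)
      · exact Or.inr (Or.inr (Or.inr h.symm))⟩)
    (fun i hRii => hRii.1 rfl)
    (fun i => (L (u i)) ∩ (L (w i)))
    hlt
  refine ⟨c, hc1, ?_⟩
  intro i j hij x y hx hy hxy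
  apply hc2 i j
  refine ⟨hij.symm, ?_⟩
  rcases hx with rfl | rfl <;> rcases hy with rfl | rfl <;> tauto
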